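/- The stationary process S_t = Ū + (κν/(κ-η)) ∫_{-∞}^t (e^{-η(t-s)} - e^{-κ(t-s)}) dW^U_s + σ ∫_{-∞}^t e^{-κ(t-s)} dW^S_s, where W^U and W^S are independent two-sided Brownian motions, has mean E[S_t] = Ū and covariance Cov(S_t, S_s) = (1/2)·(κ²/(η(κ²-η²)))·ν² e^{-η|t-s|} + (1/2)·(σ²/κ − κν²/(κ²-η²)) e^{-κ|t-s|} for all t, s. -/

import Mathlib

open Real MeasureTheory

lemma integrable_mul_of_memL2 {Ω : Type*} [MeasurableSpace Ω] {μ : Measure Ω}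
    {f g : Ω → ℝ} (hf : MemLp f 2 μ) (hg : MemLp g 2 μ) :
    Integrable (fun ω => f ω * g ω) μ := by
  refine (hf.integrable_sq.add hg.integrable_sq).mono'
    (hf.aestronglyMeasurable.mul hg.aestronglyMeasurable) ?_
  filter_upwards with ω
  simp only [Pi.add_apply]
  rw [Real.norm_eq_abs, abs_mul]
  nlinarith [sq_nonneg (|f ω| - |g ω|), sq_abs (f ω), sq_abs (g ω),
    abs_nonneg (f ω), abs_nonneg (g ω), mul_nonneg (abs_nonneg (f ω)) (abs_nonneg (g ω))]

lemma integrableOn_exp_mul_Iic' {c : ℝ} (hc : 0 < c) (m : ℝ) :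
    IntegrableOn (fun u => Real.exp (c * u)) (Set.Iic m) := by
  have h0 : Integrable ((Set.Iic (c * m)).indicator Real.exp) :=
    (integrable_indicator_iff measurableSet_Iic).2 (integrableOn_exp_Iic (c * m))
  have h1 : Integrable (fun u => ((Set.Iic (c * m)).indicator Real.exp) (c * u)) :=
    h0.comp_mul_left' hc.ne'
  have h2 : (fun u => ((Set.Iic (c * m)).indicator Real.exp) (c * u))
      = (Set.Iic m).indicator (fun u => Real.exp (c * u)) := by
    ext u
    simp [Set.indicator_apply, Set.mem_Iic, mul_le_mul_iff_right₀ hc]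
  rw [← integrable_indicator_iff measurableSet_Iic, ← h2]
  exact h1

lemma integral_Iic_exp_mul {c : ℝ} (hc : 0 < c) (m : ℝ) :
    ∫ u in Set.Iic m, Real.exp (c * u) = Real.exp (c * m) / c := by
  have h1 := integral_comp_neg_Iic m (fun x => Real.exp (-(c * x)))
  simp only [mul_neg, neg_neg] at h1
  have h2 : ∫ x in Set.Ioi (-m), Real.exp (-(c * x))
      = c⁻¹ • ∫ x in Set.Ioi (c * -m), Real.exp (-x) :=
    integral_comp_mul_left_Ioi (fun y => Real.exp (-y)) (-m) hc
  rw [h1, h2, integral_exp_neg_Ioi, smul_eq_mul, mul_neg, neg_neg]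
  ring

lemma key_exp_integral {a b : ℝ} (hab : 0 < a + b) (t s m : ℝ) :
    ∫ u in Set.Iic m, Real.exp (-a * (t - u)) * Real.exp (-b * (s - u))
      = Real.exp (-a * (t - m)) * Real.exp (-b * (s - m)) / (a + b) := by
  have hfe : (fun u => Real.exp (-a * (t - u)) * Real.exp (-b * (s - u)))
      = fun u => Real.exp (-(a * t + b * s)) * Real.exp ((a + b) * u) := by
    funext u
    rw [← Real.exp_add, ← Real.exp_add]
    ring_nf
  rw [hfe, MeasureTheory.integral_const_mul, integral_Iic_exp_mul hab m,
    mul_div_assoc', ← Real.exp_add]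
  have h : -(a * t + b * s) + (a + b) * m = -a * (t - m) + -b * (s - m) := by ring
  rw [h, Real.exp_add]

lemma key_exp_integrable {a b : ℝ} (hab : 0 < a + b) (t s m : ℝ) :
    IntegrableOn (fun u => Real.exp (-a * (t - u)) * Real.exp (-b * (s - u)))
      (Set.Iic m) := by
  have hfe : (fun u => Real.exp (-a * (t - u)) * Real.exp (-b * (s - u)))
      = fun u => Real.exp (-(a * t + b * s)) * Real.exp ((a + b) * u) := by
    funext u
    rw [← Real.exp_add, ← Real.exp_add]
    ring_nf
  rw [hfe]
  exact (integrableOn_exp_mul_Iic' hab m).const_mul _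

/-- The stationary process
`S_t = Ū + (κν/(κ-η)) ∫_{-∞}^t (e^{-η(t-s)}-e^{-κ(t-s)}) dW^U_s + σ ∫_{-∞}^t e^{-κ(t-s)} dW^S_s`
has mean `Ū` and covariance
`Cov(S_t,S_s) = (1/2)(κ²/(η(κ²-η²)))ν² e^{-η|t-s|} + (1/2)(σ²/κ - κν²/(κ²-η²)) e^{-κ|t-s|}`.
The two Wiener-integral processes `GU` and `GS` are characterized by their mean-zero,
Itô-isometry covariance and independence properties. -/
theorem stationary_nested_OU_mean_and_cov
    {Ω : Type*} [MeasurableSpace Ω] (μ : Measure Ω) [IsProbabilityMeasure μ]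
    (κ η σ ν Ubar : ℝ) (hη : 0 < η) (hκη : η < κ) (hσ : 0 < σ) (hν : 0 < ν)
    (GU GS : ℝ → Ω → ℝ)
    (hL2 : ∀ t, MemLp (GU t) 2 μ ∧ MemLp (GS t) 2 μ)
    (hmean : ∀ t, (∫ ω, GU t ω ∂μ) = 0 ∧ (∫ ω, GS t ω ∂μ) = 0)
    (hcovU : ∀ t s, (∫ ω, GU t ω * GS s ω ∂μ) = 0)
    (hisoU : ∀ t s, (∫ ω, GU t ω * GU s ω ∂μ)
      = ∫ u in Set.Iic (min t s),
          (Real.exp (-η * (t - u)) - Real.exp (-κ * (t - u)))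
            * (Real.exp (-η * (s - u)) - Real.exp (-κ * (s - u))))
    (hisoS : ∀ t s, (∫ ω, GS t ω * GS s ω ∂μ)
      = ∫ u in Set.Iic (min t s), Real.exp (-κ * (t - u)) * Real.exp (-κ * (s - u)))
    (S : ℝ → Ω → ℝ)
    (hS : ∀ t ω, S t ω = Ubar + κ * ν / (κ - η) * GU t ω + σ * GS t ω) :
    ∀ t s : ℝ,
      (∫ ω, S t ω ∂μ) = Ubar ∧
      (∫ ω, (S t ω - Ubar) * (S s ω - Ubar) ∂μ)
        = 1 / 2 * (κ ^ 2 / (η * (κ ^ 2 - η ^ 2))) * ν ^ 2 * Real.exp (-η * |t - s|)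
          + 1 / 2 * (σ ^ 2 / κ - κ * ν ^ 2 / (κ ^ 2 - η ^ 2)) * Real.exp (-κ * |t - s|) := by
  intro t s
  have hκ : 0 < κ := hη.trans hκη
  set c : ℝ := κ * ν / (κ - η) with hc
  -- integrability of the processes
  have hGUt := ((hL2 t).1.integrable one_le_two)
  have hGSt := ((hL2 t).2.integrable one_le_two)
  constructor
  · -- mean
    have hfe : (fun ω => S t ω)
        = fun ω => Ubar + (c * GU t ω + σ * GS t ω) := by
      funext ω; rw [hS]; ring
    have hI1 : Integrable (fun ω => c * GU t ω) μ := hGUt.const_mul c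
    have hI2 : Integrable (fun ω => σ * GS t ω) μ := hGSt.const_mul σ
    have hI12 : Integrable (fun ω => c * GU t ω + σ * GS t ω) μ := hI1.add hI2
    rw [hfe, integral_add (integrable_const _) hI12,
      integral_add hI1 hI2,
      integral_const_mul, integral_const_mul, (hmean t).1, (hmean t).2]
    simp
  · -- covariance
    set m : ℝ := min t s with hm
    -- L² product integrabilities
    have hUU := integrable_mul_of_memL2 (hL2 t).1 (hL2 s).1
    have hUS := integrable_mul_of_memL2 (hL2 t).1 (hL2 s).2
    have hSU := integrable_mul_of_memL2 (hL2 s).1 (hL2 t).2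
    have hSS := integrable_mul_of_memL2 (hL2 t).2 (hL2 s).2
    have hfe : (fun ω => (S t ω - Ubar) * (S s ω - Ubar))
        = fun ω => (c * c) * (GU t ω * GU s ω) + (c * σ) * (GU t ω * GS s ω)
            + (σ * c) * (GU s ω * GS t ω) + (σ * σ) * (GS t ω * GS s ω) := by
      funext ω; rw [hS, hS]; ring
    have hA : Integrable (fun ω => (c * c) * (GU t ω * GU s ω)) μ := hUU.const_mul _
    have hB : Integrable (fun ω => (c * σ) * (GU t ω * GS s ω)) μ := hUS.const_mul _
    have hC : Integrable (fun ω => (σ * c) * (GU s ω * GS t ω)) μ := hSU.const_mul _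
    have hD : Integrable (fun ω => (σ * σ) * (GS t ω * GS s ω)) μ := hSS.const_mul _
    have hAB : Integrable (fun ω => (c * c) * (GU t ω * GU s ω)
        + (c * σ) * (GU t ω * GS s ω)) μ := hA.add hB
    have hABC : Integrable (fun ω => (c * c) * (GU t ω * GU s ω)
        + (c * σ) * (GU t ω * GS s ω) + (σ * c) * (GU s ω * GS t ω)) μ := hAB.add hC
    rw [hfe]
    rw [integral_add hABC hD, integral_add hAB hC, integral_add hA hB,
      integral_const_mul, integral_const_mul, integral_const_mul, integral_const_mul,
      hcovU t s, hcovU s t, hisoU t s, hisoS t s]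
    -- expand the `GU` isometry integral
    have hηη : (0:ℝ) < η + η := by linarith
    have hηκ : (0:ℝ) < η + κ := by linarith
    have hκη' : (0:ℝ) < κ + η := by linarith
    have hκκ : (0:ℝ) < κ + κ := by linarith
    have hsplit : (fun u => (Real.exp (-η * (t - u)) - Real.exp (-κ * (t - u)))
          * (Real.exp (-η * (s - u)) - Real.exp (-κ * (s - u))))
        = fun u => Real.exp (-η * (t - u)) * Real.exp (-η * (s - u))
            - Real.exp (-η * (t - u)) * Real.exp (-κ * (s - u))
            - Real.exp (-κ * (t - u)) * Real.exp (-η * (s - u))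
            + Real.exp (-κ * (t - u)) * Real.exp (-κ * (s - u)) := by
      funext u; ring
    have hIU : (∫ u in Set.Iic m,
          (Real.exp (-η * (t - u)) - Real.exp (-κ * (t - u)))
            * (Real.exp (-η * (s - u)) - Real.exp (-κ * (s - u))))
        = Real.exp (-η * (t - m)) * Real.exp (-η * (s - m)) / (η + η)
          - Real.exp (-η * (t - m)) * Real.exp (-κ * (s - m)) / (η + κ)
          - Real.exp (-κ * (t - m)) * Real.exp (-η * (s - m)) / (κ + η)
          + Real.exp (-κ * (t - m)) * Real.exp (-κ * (s - m)) / (κ + κ) := by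
      have k1 := key_exp_integrable hηη t s m
      have k2 := key_exp_integrable hηκ t s m
      have k3 := key_exp_integrable hκη' t s m
      have k4 := key_exp_integrable hκκ t s m
      have k12 : IntegrableOn (fun u => Real.exp (-η * (t - u)) * Real.exp (-η * (s - u))
          - Real.exp (-η * (t - u)) * Real.exp (-κ * (s - u))) (Set.Iic m) := k1.sub k2
      have k123 : IntegrableOn (fun u => Real.exp (-η * (t - u)) * Real.exp (-η * (s - u))
          - Real.exp (-η * (t - u)) * Real.exp (-κ * (s - u))
          - Real.exp (-κ * (t - u)) * Real.exp (-η * (s - u))) (Set.Iic m) := k12.sub k3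
      rw [hsplit,
        integral_add k123 k4, integral_sub k12 k3, integral_sub k1 k2,
        key_exp_integral hηη, key_exp_integral hηκ, key_exp_integral hκη',
        key_exp_integral hκκ]
    rw [hIU, key_exp_integral hκκ, ← hm]
    -- now pure computation; case split on the order of t and s
    have hne1 : η + κ ≠ 0 := hηκ.ne'
    have hne2 : κ - η ≠ 0 := by linarith
    have hne3 : κ ^ 2 - η ^ 2 ≠ 0 := by nlinarith
    rcases le_total t s with h | h
    · have hmt : m = t := min_eq_left h
      have habs : |t - s| = s - t := by rw [abs_of_nonpos (by linarith)]; ring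
      rw [hmt, habs]
      simp only [sub_self, mul_zero, neg_zero, Real.exp_zero, one_mul, mul_one]
      rw [hc]
      field_simp [hη.ne', hκ.ne', hne1, hne2, hne3]
      ring
    · have hmt : m = s := min_eq_right h
      have habs : |t - s| = t - s := abs_of_nonneg (by linarith)
      rw [hmt, habs]
      simp only [sub_self, mul_zero, neg_zero, Real.exp_zero, one_mul, mul_one]
      rw [hc]
      field_simp [hη.ne', hκ.ne', hne1, hne2, hne3]
      ring
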